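/- Let P be a two-color grid poset, L := J_color(P), t ∈ L, and γ ∈ {α, β}. Then the map φ : comp_γ(t) → J(I_1) × ⋯ × J(I_k) given by φ(s) := (s ∩ I_1, …, s ∩ I_k) is a well-defined poset isomorphism onto the product of the chains J(I_1), …, J(I_k). In particular, comp_γ(t) is order-isomorphic to a product of chains. -/

import Mathlib

open scoped Classical

structure GridData (P : Type) [PartialOrder P] where
  m : ℕ
  chain : P → ℕ
  color : P → Fin 2

def IsIdeal {P : Type} [PartialOrder P] (t : Finset P) : Prop :=
  ∀ ⦃x⦄, x ∈ t → ∀ ⦃y⦄, y ≤ x → y ∈ t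

namespace GridData

variable {P : Type} [PartialOrder P] [Fintype P]

/-- The defining properties of a grid poset. -/
def IsGridPoset (G : GridData P) : Prop :=
  1 ≤ G.m ∧
  (∀ u : P, G.chain u ∈ Finset.Icc 1 G.m) ∧
  (∀ i ∈ Finset.Icc 1 G.m, ∃ u : P, G.chain u = i) ∧
  (∀ u v : P, G.chain u = G.chain v → u ≤ v ∨ v ≤ u) ∧
  (∀ u v : P, u ⋖ v → G.chain u = G.chain v ∨ G.chain u = G.chain v + 1)

/-- The defining properties of a two-color grid poset. -/
def IsTwoColorGridPoset (G : GridData P) : Prop :=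
  G.IsGridPoset ∧
  (∀ u v : P, G.chain u = G.chain v → G.color u = G.color v) ∧
  (∀ u v : P, Relation.ReflTransGen (fun x y : P => x ⋖ y ∨ y ⋖ x) u v →
    G.chain u = G.chain v + 1 → G.color u ≠ G.color v)

/-- The max property. -/
def MaxProperty (G : GridData P) : Prop :=
  (∀ u : P, IsMax u → G.chain u ≤ 2) ∧
  (∀ u v : P, IsMax u → IsMax v → u ≠ v → G.color u ≠ G.color v)

/-- The fiber `C i` of the chain function. -/
def fiber (G : GridData P) (i : ℕ) : Finset P :=
  Finset.univ.filter (fun u => G.chain u = i)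

/-- One step in a `γ`-component of `J_color(P)`: add or remove a single vertex of
color `γ` while both sets are order ideals. -/
def GStep (G : GridData P) (γ : Fin 2) (s t : Finset P) : Prop :=
  IsIdeal s ∧ IsIdeal t ∧ ∃ u : P, G.color u = γ ∧
    ((u ∉ s ∧ t = insert u s) ∨ (u ∉ t ∧ s = insert u t))

/-- The `γ`-component of `t` in `J_color(P)`. -/
def comp (G : GridData P) (γ : Fin 2) (t : Finset P) : Set (Finset P) :=
  {s | Relation.ReflTransGen (G.GStep γ) t s}

noncomputable def minCard (G : GridData P) (γ : Fin 2) (t : Finset P) : ℕ :=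
  sInf (Finset.card '' G.comp γ t)

noncomputable def maxCard (G : GridData P) (γ : Fin 2) (t : Finset P) : ℕ :=
  sSup (Finset.card '' G.comp γ t)

/-- `m_γ(t) = 2 ρ_γ(t) - l_γ(t)`. -/
noncomputable def mcoord (G : GridData P) (γ : Fin 2) (t : Finset P) : ℤ :=
  2 * ((t.card : ℤ) - (G.minCard γ t : ℤ)) - ((G.maxCard γ t : ℤ) - (G.minCard γ t : ℤ))

/-- The weight of an element of `J_color(P)` (color `0` is α, color `1` is β). -/
noncomputable def wt (G : GridData P) (t : Finset P) : Fin 2 → ℤ :=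
  ![G.mcoord 0 t, G.mcoord 1 t]

/-- `J_color(P)` is `M`-structured. -/
def MStructured (G : GridData P) (M : Matrix (Fin 2) (Fin 2) ℤ) : Prop :=
  ∀ s t : Finset P, IsIdeal s → IsIdeal t → ∀ u : P, u ∉ s → t = insert u s →
    G.wt s + M (G.color u) = G.wt t

end GridData

namespace GridData

variable {P : Type} [PartialOrder P] [Fintype P]

/-- The indices `i ∈ {1,…,m}` of the fibers whose vertices have color `γ`. -/
def colorIdx (G : GridData P) (γ : Fin 2) : Finset ℕ :=
  (Finset.Icc 1 G.m).filter (fun i => ∃ u : P, G.chain u = i ∧ G.color u = γ)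

/-- `I_j`: the largest subset `I` of the fiber `C i` such that both `t ∪ I` and
`t \ I` are order ideals (realized as the union of all such subsets). -/
noncomputable def Imax (G : GridData P) (t : Finset P) (i : ℕ) : Finset P :=
  (G.fiber i).filter (fun x =>
    ∃ J ⊆ G.fiber i, x ∈ J ∧ IsIdeal (t ∪ J) ∧ IsIdeal (t \ J))

end GridData

/-- `s` is an order ideal of the subposet `I` (in the induced order). -/
def IdealOfChain {P : Type} [PartialOrder P] (I s : Finset P) : Prop :=
  s ⊆ I ∧ ∀ x ∈ s, ∀ y ∈ I, y ≤ x → y ∈ s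

section StmtAux

variable {P : Type} [PartialOrder P] [Fintype P]

lemma chain_eq_of_mem_imax {G : GridData P} {t : Finset P} {i : ℕ} {x : P}
    (hx : x ∈ G.Imax t i) : G.chain x = i := by
  have h := (Finset.mem_filter.1 hx).1
  simpa [GridData.fiber] using h

lemma mem_imax_of_J {G : GridData P} {t : Finset P} {i : ℕ} {J : Finset P}
    (hJ : J ⊆ G.fiber i) (hU : IsIdeal (t ∪ J)) (hD : IsIdeal (t \ J)) :
    J ⊆ G.Imax t i := by
  intro x hx
  exact Finset.mem_filter.2 ⟨hJ hx, J, hJ, hx, hU, hD⟩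

lemma isIdeal_union_imax {G : GridData P} {t : Finset P} (ht : IsIdeal t) (i : ℕ) :
    IsIdeal (t ∪ G.Imax t i) := by
  intro x hx y hyx
  rcases Finset.mem_union.1 hx with hx | hx
  · exact Finset.mem_union_left _ (ht hx hyx)
  · obtain ⟨hxf, J, hJsub, hxJ, hU, hD⟩ := Finset.mem_filter.1 hx
    rcases Finset.mem_union.1 (hU (Finset.mem_union_right t hxJ) hyx) with h | h
    · exact Finset.mem_union_left _ h
    · exact Finset.mem_union_right _ (mem_imax_of_J hJsub hU hD h)

lemma isIdeal_sdiff_imax {G : GridData P} {t : Finset P} (ht : IsIdeal t) (i : ℕ) :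
    IsIdeal (t \ G.Imax t i) := by
  intro x hx y hyx
  obtain ⟨hxt, hxI⟩ := Finset.mem_sdiff.1 hx
  refine Finset.mem_sdiff.2 ⟨ht hxt hyx, ?_⟩
  intro hyI
  obtain ⟨hyf, J, hJsub, hyJ, hU, hD⟩ := Finset.mem_filter.1 hyI
  have hxJ : x ∉ J := fun h => hxI (mem_imax_of_J hJsub hU hD h)
  have h := hD (Finset.mem_sdiff.2 ⟨hxt, hxJ⟩) hyx
  exact (Finset.mem_sdiff.1 h).2 hyJ

lemma mem_imax_iff {G : GridData P} {t : Finset P} (ht : IsIdeal t) {i : ℕ} {u : P} :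
    u ∈ G.Imax t i ↔ G.chain u = i ∧
      (∀ y : P, y < u → G.chain y ≠ i → y ∈ t) ∧
      (∀ v : P, u < v → G.chain v ≠ i → v ∉ t) := by
  constructor
  · intro hu
    refine ⟨chain_eq_of_mem_imax hu, ?_, ?_⟩
    · intro y hy hyc
      have h := isIdeal_union_imax ht i (Finset.mem_union_right t hu) hy.le
      rcases Finset.mem_union.1 h with h | h
      · exact h
      · exact absurd (chain_eq_of_mem_imax h) hyc
    · intro v hv hvc hvt
      have hvI : v ∉ G.Imax t i := fun h => hvc (chain_eq_of_mem_imax h)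
      have h := isIdeal_sdiff_imax ht i (Finset.mem_sdiff.2 ⟨hvt, hvI⟩) hv.le
      exact (Finset.mem_sdiff.1 h).2 hu
  · rintro ⟨hc, h1, h2⟩
    set J := (G.fiber i).filter (fun x =>
      (∀ y : P, y < x → G.chain y ≠ i → y ∈ t) ∧
      (∀ v : P, x < v → G.chain v ≠ i → v ∉ t)) with hJdef
    have hJsub : J ⊆ G.fiber i := Finset.filter_subset _ _
    have huf : u ∈ G.fiber i := by simp [GridData.fiber, hc]
    have huJ : u ∈ J := Finset.mem_filter.2 ⟨huf, h1, h2⟩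
    have hU : IsIdeal (t ∪ J) := by
      intro x hx y hyx
      rcases Finset.mem_union.1 hx with hx | hx
      · exact Finset.mem_union_left _ (ht hx hyx)
      · obtain ⟨hxf, hx1, hx2⟩ := Finset.mem_filter.1 hx
        rcases eq_or_lt_of_le hyx with rfl | hlt
        · exact Finset.mem_union_right _ hx
        by_cases hyc : G.chain y = i
        · by_cases hyt : y ∈ t
          · exact Finset.mem_union_left _ hyt
          · refine Finset.mem_union_right _ (Finset.mem_filter.2
              ⟨by simp [GridData.fiber, hyc], ?_, ?_⟩)
            · intro z hz hzc
              exact hx1 z (hz.trans hlt) hzc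
            · intro v hv hvc hvt
              exact hyt (ht hvt hv.le)
        · exact Finset.mem_union_left _ (hx1 y hlt hyc)
    have hD : IsIdeal (t \ J) := by
      intro x hx y hyx
      obtain ⟨hxt, hxJ⟩ := Finset.mem_sdiff.1 hx
      refine Finset.mem_sdiff.2 ⟨ht hxt hyx, ?_⟩
      intro hyJ
      obtain ⟨hyf, hy1, hy2⟩ := Finset.mem_filter.1 hyJ
      have hyc : G.chain y = i := by simpa [GridData.fiber] using hyf
      by_cases hxc : G.chain x = i
      · have hx1 : ∀ z : P, z < x → G.chain z ≠ i → z ∈ t := fun z hz _ => ht hxt hz.le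
        have hnot : ¬ (∀ v : P, x < v → G.chain v ≠ i → v ∉ t) := by
          intro h2x
          exact hxJ (Finset.mem_filter.2 ⟨by simp [GridData.fiber, hxc], hx1, h2x⟩)
        push_neg at hnot
        obtain ⟨v, hv, hvc, hvt⟩ := hnot
        exact hy2 v (lt_of_le_of_lt hyx hv) hvc hvt
      · have hne : y ≠ x := fun h => hxc (h ▸ hyc)
        exact hy2 x (lt_of_le_of_ne hyx hne) hxc hxt
    exact mem_imax_of_J hJsub hU hD huJ

lemma exists_covby_le {a b : P} (hab : a < b) : ∃ c : P, a ⋖ c ∧ c ≤ b := by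
  classical
  have hne : (Finset.univ.filter (fun x : P => a < x ∧ x ≤ b)).Nonempty :=
    ⟨b, by simp [hab]⟩
  obtain ⟨c, hc, hmin⟩ : ∃ c ∈ Finset.univ.filter (fun x : P => a < x ∧ x ≤ b), ∀ x ∈ Finset.univ.filter (fun x : P => a < x ∧ x ≤ b), ¬ x < c := by
    obtain ⟨c, hc, h⟩ := Finset.exists_minimal hne
    exact ⟨c, hc, fun x hx hlt => hlt.not_ge (h hx hlt.le)⟩
  rw [Finset.mem_filter] at hc
  refine ⟨c, ⟨hc.2.1, ?_⟩, hc.2.2⟩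
  intro z hz1 hz2
  exact hmin z (by simp [hz1, hz2.le.trans hc.2.2]) hz2

lemma exists_drop {G : GridData P}
    (hcov : ∀ u v : P, u ⋖ v → G.chain u = G.chain v ∨ G.chain u = G.chain v + 1) :
    ∀ b a : P, a < b → G.chain b ≤ G.chain a ∧ (G.chain b ≠ G.chain a →
      ∃ w : P, a < w ∧ w ≤ b ∧ G.chain w + 1 = G.chain a ∧
        Relation.ReflTransGen (fun x y : P => x ⋖ y ∨ y ⋖ x) a w) := by
  intro b a
  have wf : WellFounded ((· > ·) : P → P → Prop) := wellFounded_gt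
  refine WellFounded.induction wf
    (C := fun a : P => a < b → G.chain b ≤ G.chain a ∧ (G.chain b ≠ G.chain a →
      ∃ w : P, a < w ∧ w ≤ b ∧ G.chain w + 1 = G.chain a ∧
        Relation.ReflTransGen (fun x y : P => x ⋖ y ∨ y ⋖ x) a w)) a ?_
  clear a
  intro a IH hab
  obtain ⟨c, hac, hcb⟩ := exists_covby_le hab
  rcases hcb.eq_or_lt with rfl | hcb'
  · rcases hcov a c hac with h | h
    · exact ⟨le_of_eq h.symm, fun hne => absurd h.symm hne⟩
    · refine ⟨by omega, fun _ => ⟨c, hac.lt, le_rfl, by omega, ?_⟩⟩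
      exact Relation.ReflTransGen.single (Or.inl hac)
  · obtain ⟨h1, h2⟩ := IH c hac.lt hcb'
    rcases hcov a c hac with h | h
    · refine ⟨by omega, fun hne => ?_⟩
      obtain ⟨w, hcw, hwb, hwc, hconn⟩ := h2 (by omega)
      exact ⟨w, hac.lt.trans hcw, hwb, by omega,
        Relation.ReflTransGen.head (Or.inl hac) hconn⟩
    · refine ⟨by omega, fun _ => ⟨c, hac.lt, hcb'.le, by omega,
        Relation.ReflTransGen.single (Or.inl hac)⟩⟩

lemma color_of_colorIdx {G : GridData P}
    (hconst : ∀ u v : P, G.chain u = G.chain v → G.color u = G.color v)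
    {γ : Fin 2} {i : ℕ} (hi : i ∈ G.colorIdx γ) {x : P} (hx : G.chain x = i) :
    G.color x = γ := by
  obtain ⟨-, u, hu, hucol⟩ := Finset.mem_filter.1 hi
  rw [← hucol]
  exact hconst x u (by rw [hx, hu])

/-- The union of the `Imax` sets over the `γ`-colored fiber indices, as a predicate. -/
def InU (G : GridData P) (t : Finset P) (γ : Fin 2) (x : P) : Prop :=
  ∃ i ∈ G.colorIdx γ, x ∈ G.Imax t i

lemma key_mem_imax {G : GridData P} (hG : G.IsTwoColorGridPoset) {t : Finset P}
    (ht : IsIdeal t) {γ : Fin 2} {s : Finset P}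
    (hs : ∀ x : P, ¬ InU G t γ x → (x ∈ s ↔ x ∈ t))
    {u : P} (hcol : G.color u = γ)
    (hdown : ∀ y : P, y < u → y ∈ s) (hup : ∀ v : P, u < v → v ∉ s) :
    u ∈ G.Imax t (G.chain u) := by
  obtain ⟨⟨hm, hIcc, hsurj, hcomp, hcov⟩, hconst, hdiff⟩ := hG
  rw [mem_imax_iff ht]
  refine ⟨rfl, ?_, ?_⟩
  · intro y hyu hyc
    by_cases hyU : InU G t γ y
    · obtain ⟨j, hj, hyI⟩ := hyU
      have hychain : G.chain y = j := chain_eq_of_mem_imax hyI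
      obtain ⟨hle, hdrop⟩ := exists_drop hcov u y hyu
      obtain ⟨w, hyw, hwu, hwc, hconn⟩ := hdrop (fun h => hyc h.symm)
      have hycol : G.color y = γ := color_of_colorIdx hconst hj hychain
      have hwcol : G.color w ≠ γ := by
        have h := hdiff y w hconn hwc.symm
        rw [hycol] at h
        exact fun hh => h hh.symm
      have hwU : ¬ InU G t γ w := by
        rintro ⟨j', hj', hwI⟩
        exact hwcol (color_of_colorIdx hconst hj' (chain_eq_of_mem_imax hwI))
      have hwne : w ≠ u := fun h => hwcol (h ▸ hcol)
      have hws : w ∈ s := hdown w (lt_of_le_of_ne hwu hwne)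
      have hwt : w ∈ t := (hs w hwU).1 hws
      exact ht hwt hyw.le
    · exact (hs y hyU).1 (hdown y hyu)
  · intro v huv hvc hvt
    by_cases hvU : InU G t γ v
    · obtain ⟨j, hj, hvI⟩ := hvU
      obtain ⟨hle, hdrop⟩ := exists_drop hcov v u huv
      obtain ⟨w, huw, hwv, hwc, hconn⟩ := hdrop hvc
      have hwcol : G.color w ≠ γ := by
        have h := hdiff u w hconn hwc.symm
        rw [hcol] at h
        exact fun hh => h hh.symm
      have hwU : ¬ InU G t γ w := by
        rintro ⟨j', hj', hwI⟩
        exact hwcol (color_of_colorIdx hconst hj' (chain_eq_of_mem_imax hwI))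
      have hwns : w ∉ s := hup w huw
      have hwt : w ∉ t := fun h => hwns ((hs w hwU).2 h)
      rcases hwv.eq_or_lt with rfl | hwv'
      · exact hwt hvt
      · exact hwt (ht hvt hwv'.le)
    · have hvs : v ∉ s := hup v huv
      exact hvs ((hs v hvU).2 hvt)

lemma chain_mem_colorIdx {G : GridData P} (hG : G.IsTwoColorGridPoset)
    {γ : Fin 2} {u : P} (hcol : G.color u = γ) : G.chain u ∈ G.colorIdx γ :=
  Finset.mem_filter.2 ⟨hG.1.2.1 u, u, rfl, hcol⟩

lemma comp_inv {G : GridData P} (hG : G.IsTwoColorGridPoset) {t : Finset P}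
    (ht : IsIdeal t) {γ : Fin 2} {s : Finset P} (hsc : s ∈ G.comp γ t) :
    IsIdeal s ∧ ∀ x : P, ¬ InU G t γ x → (x ∈ s ↔ x ∈ t) := by
  induction hsc with
  | refl => exact ⟨ht, fun x _ => Iff.rfl⟩
  | @tail b c hab hbc IH =>
    obtain ⟨hIb, hx⟩ := IH
    obtain ⟨hi1, hi2, u, hcol, hcase⟩ := hbc
    have huI : u ∈ G.Imax t (G.chain u) := by
      rcases hcase with ⟨hu, rfl⟩ | ⟨hu, rfl⟩
      · refine key_mem_imax hG ht hx hcol ?_ ?_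
        · intro y hy
          have hyc : y ∈ insert u b := hi2 (Finset.mem_insert_self u b) hy.le
          rcases Finset.mem_insert.1 hyc with rfl | h
          · exact absurd rfl hy.ne
          · exact h
        · intro v hv hvs
          exact hu (hi1 hvs hv.le)
      · refine key_mem_imax hG ht hx hcol ?_ ?_
        · intro y hy
          exact hi1 (Finset.mem_insert_self u c) hy.le
        · intro v hv hvs
          rcases Finset.mem_insert.1 hvs with rfl | h
          · exact absurd rfl hv.ne'
          · exact hu (hi2 h hv.le)
    have huU : InU G t γ u := ⟨G.chain u, chain_mem_colorIdx hG hcol, huI⟩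
    refine ⟨hi2, fun x hxU => ?_⟩
    have hne : x ≠ u := fun h => hxU (h ▸ huU)
    rcases hcase with ⟨hu, rfl⟩ | ⟨hu, heq⟩
    · rw [Finset.mem_insert]
      simp only [hne, false_or]
      exact hx x hxU
    · rw [heq] at hx
      have := hx x hxU
      rw [Finset.mem_insert] at this
      simp only [hne, false_or] at this
      exact this

lemma good_mem_comp {G : GridData P} (hG : G.IsTwoColorGridPoset) {t : Finset P}
    (ht : IsIdeal t) {γ : Fin 2} :
    ∀ n : ℕ, ∀ s : Finset P, (s \ t).card + (t \ s).card ≤ n → IsIdeal s →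
      (∀ x : P, ¬ InU G t γ x → (x ∈ s ↔ x ∈ t)) → s ∈ G.comp γ t := by
  intro n
  induction n with
  | zero =>
    intro s hcard _ _
    have h1 : s \ t = ∅ := Finset.card_eq_zero.1 (by omega)
    have h2 : t \ s = ∅ := Finset.card_eq_zero.1 (by omega)
    have : s = t :=
      Finset.Subset.antisymm (Finset.sdiff_eq_empty_iff_subset.1 h1)
        (Finset.sdiff_eq_empty_iff_subset.1 h2)
    rw [this]
    exact Relation.ReflTransGen.refl
  | succ n IH =>
    intro s hcard hIs hsU
    by_cases hne : (s \ t).Nonempty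
    · obtain ⟨u, hu, hmax⟩ : ∃ u ∈ s \ t, ∀ x ∈ s \ t, ¬ u < x := by
        obtain ⟨u, hu, h⟩ := Finset.exists_maximal hne
        exact ⟨u, hu, fun x hx hlt => hlt.not_ge (h hx hlt.le)⟩
      obtain ⟨hus, hut⟩ := Finset.mem_sdiff.1 hu
      have huU : InU G t γ u := by
        by_contra h
        exact hut ((hsU u h).1 hus)
      obtain ⟨i, hi, huI⟩ := huU
      have hucol : G.color u = γ := color_of_colorIdx hG.2.1 hi (chain_eq_of_mem_imax huI)
      have hImax : ∀ x ∈ s, u ≤ x → x = u := by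
        intro x hxs hux
        by_contra hne'
        have hlt : u < x := lt_of_le_of_ne hux (fun h => hne' h.symm)
        by_cases hxt : x ∈ t
        · exact hut (ht hxt hlt.le)
        · exact hmax x (Finset.mem_sdiff.2 ⟨hxs, hxt⟩) hlt
      have hIs' : IsIdeal (s.erase u) := by
        intro x hx y hyx
        obtain ⟨hxne, hxs⟩ := Finset.mem_erase.1 hx
        refine Finset.mem_erase.2 ⟨?_, hIs hxs hyx⟩
        rintro rfl
        exact hxne (hImax x hxs hyx)
      have hsU' : ∀ x : P, ¬ InU G t γ x → (x ∈ s.erase u ↔ x ∈ t) := by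
        intro x hxU
        have hne' : x ≠ u := fun h => hxU (h ▸ ⟨i, hi, huI⟩)
        rw [Finset.mem_erase, and_iff_right hne']
        exact hsU x hxU
      have hcard' : (s.erase u \ t).card + (t \ s.erase u).card ≤ n := by
        have e1 : s.erase u \ t = (s \ t).erase u := by
          ext x
          simp only [Finset.mem_sdiff, Finset.mem_erase]
          tauto
        have e2 : t \ s.erase u = t \ s := by
          ext x
          simp only [Finset.mem_sdiff, Finset.mem_erase]
          constructor
          · rintro ⟨hxt, h⟩
            exact ⟨hxt, fun hxs => h ⟨fun hh => hut (hh ▸ hxt), hxs⟩⟩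
          · rintro ⟨hxt, h⟩
            exact ⟨hxt, fun hh => h hh.2⟩
        have hpos : 0 < (s \ t).card := Finset.card_pos.2 ⟨u, hu⟩
        rw [e1, e2, Finset.card_erase_of_mem hu]
        omega
      have hmem := IH (s.erase u) hcard' hIs' hsU'
      refine Relation.ReflTransGen.tail hmem ?_
      exact ⟨hIs', hIs, u, hucol, Or.inl ⟨Finset.notMem_erase u s,
        (Finset.insert_erase hus).symm⟩⟩
    · have hsub : s ⊆ t := by
        rw [← Finset.sdiff_eq_empty_iff_subset]
        exact Finset.not_nonempty_iff_eq_empty.1 hne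
      by_cases hts : (t \ s).Nonempty
      · obtain ⟨u, hu, hmin⟩ : ∃ u ∈ t \ s, ∀ x ∈ t \ s, ¬ x < u := by
          obtain ⟨u, hu, h⟩ := Finset.exists_minimal hts
          exact ⟨u, hu, fun x hx hlt => hlt.not_ge (h hx hlt.le)⟩
        obtain ⟨hut, hus⟩ := Finset.mem_sdiff.1 hu
        have huU : InU G t γ u := by
          by_contra h
          exact hus ((hsU u h).2 hut)
        obtain ⟨i, hi, huI⟩ := huU
        have hucol : G.color u = γ := color_of_colorIdx hG.2.1 hi (chain_eq_of_mem_imax huI)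
        have hIs' : IsIdeal (insert u s) := by
          intro x hx y hyx
          rcases Finset.mem_insert.1 hx with rfl | hxs
          · rcases eq_or_lt_of_le hyx with rfl | hlt
            · exact Finset.mem_insert_self _ _
            · have hyt : y ∈ t := ht hut hlt.le
              refine Finset.mem_insert_of_mem ?_
              by_contra hys
              exact hmin y (Finset.mem_sdiff.2 ⟨hyt, hys⟩) hlt
          · exact Finset.mem_insert_of_mem (hIs hxs hyx)
        have hsU' : ∀ x : P, ¬ InU G t γ x → (x ∈ insert u s ↔ x ∈ t) := by
          intro x hxU
          have hne' : x ≠ u := fun h => hxU (h ▸ ⟨i, hi, huI⟩)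
          rw [Finset.mem_insert]
          simp only [hne', false_or]
          exact hsU x hxU
        have hcard' : (insert u s \ t).card + (t \ insert u s).card ≤ n := by
          have e1 : insert u s \ t = ∅ := by
            rw [Finset.sdiff_eq_empty_iff_subset]
            exact Finset.insert_subset hut hsub
          have e2 : t \ insert u s = (t \ s).erase u := by
            ext x
            simp only [Finset.mem_sdiff, Finset.mem_erase, Finset.mem_insert]
            tauto
          have e3 : s \ t = ∅ := Finset.not_nonempty_iff_eq_empty.1 hne
          have hpos : 0 < (t \ s).card := Finset.card_pos.2 ⟨u, hu⟩
          rw [e1, e2, Finset.card_erase_of_mem hu]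
          rw [e3] at hcard
          simp only [Finset.card_empty] at hcard ⊢
          omega
        have hmem := IH (insert u s) hcard' hIs' hsU'
        refine Relation.ReflTransGen.tail hmem ?_
        exact ⟨hIs', hIs, u, hucol, Or.inr ⟨hus, rfl⟩⟩
      · have h2 : t \ s = ∅ := Finset.not_nonempty_iff_eq_empty.1 (by exact hts)
        have : s = t := Finset.Subset.antisymm hsub (Finset.sdiff_eq_empty_iff_subset.1 h2)
        rw [this]
        exact Relation.ReflTransGen.refl

end StmtAux

/-- Proposition 3.1: `φ(s) = (s ∩ I_1, …, s ∩ I_k)` is a well-defined poset isomorphism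
from `comp_γ(t)` onto the product of the chains `J(I_1), …, J(I_k)`; in particular
each `J(I_j)` is a chain, `φ` is an order embedding in both directions (hence injective),
and `φ` is surjective. -/
theorem stmt_8 {P : Type} [PartialOrder P] [Fintype P] (G : GridData P)
    (hG : G.IsTwoColorGridPoset) (t : Finset P) (ht : IsIdeal t) (γ : Fin 2) :
    (∀ i ∈ G.colorIdx γ, ∀ s₁ s₂ : Finset P, IdealOfChain (G.Imax t i) s₁ →
        IdealOfChain (G.Imax t i) s₂ → s₁ ⊆ s₂ ∨ s₂ ⊆ s₁) ∧
    (∀ s ∈ G.comp γ t, ∀ i ∈ G.colorIdx γ,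
        IdealOfChain (G.Imax t i) (s ∩ G.Imax t i)) ∧
    (∀ s₁ ∈ G.comp γ t, ∀ s₂ ∈ G.comp γ t,
        (s₁ ⊆ s₂ ↔ ∀ i ∈ G.colorIdx γ, s₁ ∩ G.Imax t i ⊆ s₂ ∩ G.Imax t i)) ∧
    (∀ f : ℕ → Finset P, (∀ i ∈ G.colorIdx γ, IdealOfChain (G.Imax t i) (f i)) →
        ∃ s ∈ G.comp γ t, ∀ i ∈ G.colorIdx γ, s ∩ G.Imax t i = f i) := by
  obtain ⟨⟨hm, hIcc, hsurj, hcomp, hcov⟩, hconst, hdiff⟩ := hG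
  have hG' : G.IsTwoColorGridPoset := ⟨⟨hm, hIcc, hsurj, hcomp, hcov⟩, hconst, hdiff⟩
  refine ⟨?_, ?_, ?_, ?_⟩
  · -- each `J(I_j)` is a chain
    intro i hi s₁ s₂ h₁ h₂
    by_contra hcon
    push_neg at hcon
    obtain ⟨h12, h21⟩ := hcon
    obtain ⟨x, hx1, hx2⟩ := Finset.not_subset.1 h12
    obtain ⟨y, hy2, hy1⟩ := Finset.not_subset.1 h21
    have hxI := h₁.1 hx1
    have hyI := h₂.1 hy2
    rcases hcomp x y (by rw [chain_eq_of_mem_imax hxI, chain_eq_of_mem_imax hyI]) with h | h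
    · exact hx2 (h₂.2 y hy2 x hxI h)
    · exact hy1 (h₁.2 x hx1 y hyI h)
  · -- well-definedness
    intro s hs i hi
    have hIs : IsIdeal s := (comp_inv hG' ht hs).1
    refine ⟨Finset.inter_subset_right, ?_⟩
    intro x hx y hyI hyx
    obtain ⟨hxs, -⟩ := Finset.mem_inter.1 hx
    exact Finset.mem_inter.2 ⟨hIs hxs hyx, hyI⟩
  · -- order embedding in both directions
    intro s₁ hs₁ s₂ hs₂
    constructor
    · intro h i hi
      exact Finset.inter_subset_inter h (Finset.Subset.refl _)
    · intro h x hx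
      by_cases hxU : InU G t γ x
      · obtain ⟨i, hi, hxI⟩ := hxU
        have := h i hi (Finset.mem_inter.2 ⟨hx, hxI⟩)
        exact (Finset.mem_inter.1 this).1
      · exact ((comp_inv hG' ht hs₂).2 x hxU).2 (((comp_inv hG' ht hs₁).2 x hxU).1 hx)
  · -- surjectivity
    intro f hf
    classical
    set s₀ : Finset P := (t.filter (fun x => ¬ InU G t γ x)) ∪ (G.colorIdx γ).biUnion f
      with hs₀def
    have hinter : ∀ i ∈ G.colorIdx γ, s₀ ∩ G.Imax t i = f i := by
      intro i hi
      ext x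
      simp only [Finset.mem_inter, hs₀def, Finset.mem_union, Finset.mem_filter,
        Finset.mem_biUnion]
      constructor
      · rintro ⟨h, hxI⟩
        rcases h with ⟨hxt, hxU⟩ | ⟨j, hj, hxf⟩
        · exact absurd ⟨i, hi, hxI⟩ hxU
        · have hji : j = i := by
            rw [← chain_eq_of_mem_imax ((hf j hj).1 hxf), ← chain_eq_of_mem_imax hxI]
          exact hji ▸ hxf
      · intro hxf
        exact ⟨Or.inr ⟨i, hi, hxf⟩, (hf i hi).1 hxf⟩
    have hout : ∀ x : P, ¬ InU G t γ x → (x ∈ s₀ ↔ x ∈ t) := by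
      intro x hxU
      simp only [hs₀def, Finset.mem_union, Finset.mem_filter, Finset.mem_biUnion]
      constructor
      · rintro (⟨hxt, -⟩ | ⟨j, hj, hxf⟩)
        · exact hxt
        · exact absurd ⟨j, hj, (hf j hj).1 hxf⟩ hxU
      · intro hxt
        exact Or.inl ⟨hxt, hxU⟩
    have hIdeal : IsIdeal s₀ := by
      intro x hx y hyx
      rcases eq_or_lt_of_le hyx with rfl | hlt
      · exact hx
      rcases Finset.mem_union.1 hx with hx' | hx'
      · obtain ⟨hxt, hxU⟩ := Finset.mem_filter.1 hx'
        have hyt : y ∈ t := ht hxt hyx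
        have hyU : ¬ InU G t γ y := by
          rintro ⟨j, hj, hyI⟩
          have hxI : x ∉ G.Imax t j := fun h => hxU ⟨j, hj, h⟩
          have h := isIdeal_sdiff_imax ht j (Finset.mem_sdiff.2 ⟨hxt, hxI⟩) hyx
          exact (Finset.mem_sdiff.1 h).2 hyI
        exact Finset.mem_union_left _ (Finset.mem_filter.2 ⟨hyt, hyU⟩)
      · obtain ⟨i, hi, hxf⟩ := Finset.mem_biUnion.1 hx'
        have hxI : x ∈ G.Imax t i := (hf i hi).1 hxf
        obtain ⟨hcx, hx1, hx2⟩ := (mem_imax_iff ht).1 hxI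
        by_cases hyU : InU G t γ y
        · obtain ⟨j, hj, hyI⟩ := hyU
          have hcy : G.chain y = j := chain_eq_of_mem_imax hyI
          by_cases hij : j = i
          · subst hij
            exact Finset.mem_union_right _
              (Finset.mem_biUnion.2 ⟨j, hj, (hf j hj).2 x hxf y hyI hyx⟩)
          · exfalso
            obtain ⟨hle, hdrop⟩ := exists_drop hcov x y hlt
            obtain ⟨w, hyw, hwx, hwc, hconn⟩ :=
              hdrop (by rw [hcx, hcy]; exact fun h => hij h.symm)
            have hycol : G.color y = γ := color_of_colorIdx hconst hj hcy
            have hwcol : G.color w ≠ γ := by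
              have h := hdiff y w hconn hwc.symm
              rw [hycol] at h
              exact fun hh => h hh.symm
            have hwi : G.chain w ≠ i := fun h => hwcol (color_of_colorIdx hconst hi h)
            have hwlt : w < x := lt_of_le_of_ne hwx (fun h => hwi (h ▸ hcx))
            have hwt : w ∈ t := hx1 w hwlt hwi
            obtain ⟨hcy', hy1, hy2⟩ := (mem_imax_iff ht).1 hyI
            exact hy2 w hyw (by omega) hwt
        · have hyt : y ∈ t := by
            by_cases hcyi : G.chain y = i
            · have h := isIdeal_union_imax ht i (Finset.mem_union_right t hxI) hyx
              rcases Finset.mem_union.1 h with h | h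
              · exact h
              · exact absurd ⟨i, hi, h⟩ hyU
            · exact hx1 y hlt hcyi
          exact Finset.mem_union_left _ (Finset.mem_filter.2 ⟨hyt, hyU⟩)
    have hs₀comp : s₀ ∈ G.comp γ t :=
      good_mem_comp hG' ht ((s₀ \ t).card + (t \ s₀).card) s₀ le_rfl hIdeal hout
    exact ⟨s₀, hs₀comp, hinter⟩
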